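/- arXiv:2503.20524 — 4 statements merged into one kernel-verified Lean document; each statement's English description precedes it below -/
import Mathlib

section
/- Let φ: U × ℝ^d → [0,∞) be an admissible anisotropy with dual φ°. Then for every x ∈ U, every ν ∈ ℝ^d∖{0}, and every i = 1,…,d one has ∂_{x_i}φ(x, ∇_νφ°(x,ν)) + ∂_{x_i}φ°(x, ν/φ°(x,ν)) = 0, where ∂_{x_i} denotes the partial derivative in the first (spatial) argument, evaluated at the indicated points. -/
open MeasureTheory

/-- The dual anisotropy `φ°(x,ν*) = sup { ν*·ν : φ(x,ν) ≤ 1 }`. -/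
noncomputable def anisoDual {d : ℕ}
    (φ : EuclideanSpace ℝ (Fin d) → EuclideanSpace ℝ (Fin d) → ℝ)
    (x ν : EuclideanSpace ℝ (Fin d)) : ℝ :=
  sSup ((fun w => (inner ℝ ν w : ℝ)) '' {w | φ x w ≤ 1})

/-- An admissible anisotropy on an open set `U ⊆ ℝ^d`. -/
structure IsAdmissibleAnisotropy {d : ℕ} (U : Set (EuclideanSpace ℝ (Fin d)))
    (φ : EuclideanSpace ℝ (Fin d) → EuclideanSpace ℝ (Fin d) → ℝ) : Prop where
  nonneg : ∀ x ∈ U, ∀ ν, 0 ≤ φ x ν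
  smooth : ContDiffOn ℝ 2
      (fun p : EuclideanSpace ℝ (Fin d) × EuclideanSpace ℝ (Fin d) => φ p.1 p.2)
      (U ×ˢ ({(0 : EuclideanSpace ℝ (Fin d))}ᶜ))
  strictConvexSq : ∀ x ∈ U, StrictConvexOn ℝ Set.univ fun ν => φ x ν ^ 2
  homogeneous : ∀ x ∈ U, ∀ (ν : EuclideanSpace ℝ (Fin d)) (l : ℝ), φ x (l • ν) = |l| * φ x ν
  bounds : ∃ cφ Cφ : ℝ, 0 < cφ ∧ cφ ≤ Cφ ∧
      ∀ x ∈ U, ∀ ν, cφ * ‖ν‖ ≤ φ x ν ∧ φ x ν ≤ Cφ * ‖ν‖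

/-- spatial-derivative identity \eqref{property anisotropy phi 4}. -/
theorem spatial_derivative_identity_two {d : ℕ} (U : Set (EuclideanSpace ℝ (Fin d))) (hU : IsOpen U)
    (φ φd : EuclideanSpace ℝ (Fin d) → EuclideanSpace ℝ (Fin d) → ℝ)
    (hφ : IsAdmissibleAnisotropy U φ)
    (hdual : ∀ x ν, φd x ν = anisoDual φ x ν)
    (hφd : IsAdmissibleAnisotropy U φd)
    -- classical duality identities (granted by the context)
    (hEuler : ∀ x ∈ U, ∀ ν : EuclideanSpace ℝ (Fin d), ν ≠ 0 →
      φ x ν = (inner ℝ (gradient (φ x) ν) ν : ℝ)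
      ∧ φd x ν = (inner ℝ (gradient (φd x) ν) ν : ℝ))
    (hOne : ∀ x ∈ U, ∀ ν : EuclideanSpace ℝ (Fin d), ν ≠ 0 →
      φ x (gradient (φd x) ν) = 1 ∧ φd x (gradient (φ x) ν) = 1)
    (hInv : ∀ x ∈ U, ∀ ν : EuclideanSpace ℝ (Fin d), ν ≠ 0 →
      φd x ν • gradient (φ x) (gradient (φd x) ν) = ν
      ∧ φ x ν • gradient (φd x) (gradient (φ x) ν) = ν)
    (x : EuclideanSpace ℝ (Fin d)) (hx : x ∈ U)
    (ν : EuclideanSpace ℝ (Fin d)) (hν : ν ≠ 0) (i : Fin d) :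
    fderiv ℝ (fun y => φ y (gradient (φd x) ν)) x (EuclideanSpace.single i 1)
      + fderiv ℝ (fun y => φd y ((φd x ν)⁻¹ • ν)) x (EuclideanSpace.single i 1) = 0 := by
  classical
  set w := gradient (φd x) ν with hw
  -- φ x w = 1
  have hφxw : φ x w = 1 := (hOne x hx ν hν).1
  -- φ x 0 = 0
  have hzero : ∀ ψ : EuclideanSpace ℝ (Fin d) → EuclideanSpace ℝ (Fin d) → ℝ,
      IsAdmissibleAnisotropy U ψ → ψ x 0 = 0 := by
    intro ψ hψ
    have := hψ.homogeneous x hx 0 0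
    simpa using this
  have hwne : w ≠ 0 := by
    intro h
    rw [h, hzero φ hφ] at hφxw
    norm_num at hφxw
  -- c := φd x ν > 0
  obtain ⟨cφ, Cφ, hcφ, _, hb⟩ := hφ.bounds
  obtain ⟨cd, Cd, hcd, _, hbd⟩ := hφd.bounds
  set c := φd x ν with hc
  have hcpos : 0 < c := by
    have := (hbd x hx ν).1
    have hν' : 0 < ‖ν‖ := norm_pos_iff.mpr hν
    nlinarith
  -- Euler: c = ⟪ν, w⟫
  have hEul : (inner ℝ ν w : ℝ) = c := by
    have := (hEuler x hx ν hν).2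
    rw [real_inner_comm]
    exact this.symm
  -- positivity of φ y w for y ∈ U
  have hgpos : ∀ y ∈ U, 0 < φ y w := by
    intro y hy
    have := (hb y hy w).1
    have : cφ * ‖w‖ ≤ φ y w := this
    have hw' : 0 < ‖w‖ := norm_pos_iff.mpr hwne
    nlinarith
  -- differentiability of (y, v) ↦ φ y v type compositions
  have hSopen : IsOpen (U ×ˢ ({(0 : EuclideanSpace ℝ (Fin d))}ᶜ)) :=
    hU.prod isOpen_compl_singleton
  have hdiffg : DifferentiableAt ℝ (fun y => φ y w) x := by
    have hmem : (x, w) ∈ U ×ˢ ({(0 : EuclideanSpace ℝ (Fin d))}ᶜ) := ⟨hx, hwne⟩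
    have hF : DifferentiableAt ℝ
        (fun p : EuclideanSpace ℝ (Fin d) × EuclideanSpace ℝ (Fin d) => φ p.1 p.2) (x, w) :=
      (hφ.smooth.contDiffAt (hSopen.mem_nhds hmem)).differentiableAt (by norm_num)
    exact hF.comp x (DifferentiableAt.prodMk (𝕜 := ℝ) differentiableAt_fun_id (differentiableAt_const w))
  have hdiffgd : DifferentiableAt ℝ (fun y => φd y ν) x := by
    have hmem : (x, ν) ∈ U ×ˢ ({(0 : EuclideanSpace ℝ (Fin d))}ᶜ) := ⟨hx, hν⟩
    have hF : DifferentiableAt ℝ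
        (fun p : EuclideanSpace ℝ (Fin d) × EuclideanSpace ℝ (Fin d) => φd p.1 p.2) (x, ν) :=
      (hφd.smooth.contDiffAt (hSopen.mem_nhds hmem)).differentiableAt (by norm_num)
    exact hF.comp x (DifferentiableAt.prodMk (𝕜 := ℝ) differentiableAt_fun_id (differentiableAt_const ν))
  -- the key inequality: φd y ν ≥ c * (φ y w)⁻¹ for y ∈ U
  have hineq : ∀ y ∈ U, c * (φ y w)⁻¹ ≤ φd y ν := by
    intro y hy
    have hgy := hgpos y hy
    rw [hdual y ν, anisoDual]
    apply le_csSup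
    · -- bounded above
      refine ⟨‖ν‖ * cφ⁻¹, ?_⟩
      rintro z ⟨u, hu, rfl⟩
      have h1 : cφ * ‖u‖ ≤ 1 := le_trans (hb y hy u).1 hu
      have h2 : ‖u‖ ≤ cφ⁻¹ := by
        nlinarith [mul_inv_cancel₀ hcφ.ne', norm_nonneg u]
      calc (inner ℝ ν u : ℝ) ≤ ‖ν‖ * ‖u‖ := real_inner_le_norm ν u
        _ ≤ ‖ν‖ * cφ⁻¹ := by nlinarith [norm_nonneg ν]
    · refine ⟨(φ y w)⁻¹ • w, ?_, ?_⟩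
      · show φ y ((φ y w)⁻¹ • w) ≤ 1
        rw [hφ.homogeneous y hy w, abs_of_pos (inv_pos.mpr hgy), inv_mul_cancel₀ hgy.ne']
      · show (inner ℝ ν ((φ y w)⁻¹ • w) : ℝ) = c * (φ y w)⁻¹
        rw [real_inner_smul_right, hEul, mul_comm]
  -- local minimum
  set g := fun y => φ y w with hg
  set L := fderiv ℝ g x with hL
  have hgx : g x = 1 := hφxw
  have hHg : HasFDerivAt g L x := hdiffg.hasFDerivAt
  have hHinv : HasFDerivAt (fun y => c * (g y)⁻¹) (c • ((-(g x ^ 2)⁻¹ : ℝ) • L)) x := by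
    have h1 : HasFDerivAt (fun y => (g y)⁻¹) ((-(g x ^ 2)⁻¹ : ℝ) • L) x :=
      (hasDerivAt_inv (by rw [hgx]; norm_num)).comp_hasFDerivAt x hHg
    exact h1.const_mul c
  have hHinv' : HasFDerivAt (fun y => c * (g y)⁻¹) (-(c • L)) x := by
    convert hHinv using 1
    rw [hgx]
    simp [smul_smul]
  set M := fderiv ℝ (fun y => φd y ν) x with hM
  have hHgd : HasFDerivAt (fun y => φd y ν) M x := hdiffgd.hasFDerivAt
  have hmin : IsLocalMin (fun y => φd y ν - c * (g y)⁻¹) x := by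
    filter_upwards [hU.mem_nhds hx] with y hy
    have h1 := hineq y hy
    have h2 : φd x ν - c * (g x)⁻¹ = 0 := by rw [hgx]; simp [hc]
    simp only [h2]
    linarith
  have hder0 : M - (-(c • L)) = 0 := by
    have := hmin.fderiv_eq_zero
    have h3 : fderiv ℝ (fun y => φd y ν - c * (g y)⁻¹) x = M - (-(c • L)) :=
      (hHgd.sub hHinv').fderiv
    rw [h3] at this
    exact this
  have hMeq : M = -(c • L) := by
    have := sub_eq_zero.mp hder0
    exact this
  -- the second fderiv in the statement
  have hmain2 : fderiv ℝ (fun y => φd y (c⁻¹ • ν)) x = c⁻¹ • M := by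
    have heq : (fun y => φd y (c⁻¹ • ν)) =ᶠ[nhds x] (fun y => c⁻¹ * φd y ν) := by
      filter_upwards [hU.mem_nhds hx] with y hy
      rw [hφd.homogeneous y hy ν c⁻¹, abs_of_pos (inv_pos.mpr hcpos)]
    rw [heq.fderiv_eq]
    exact (hHgd.const_mul c⁻¹).fderiv
  show L (EuclideanSpace.single i 1)
      + (fderiv ℝ (fun y => φd y (c⁻¹ • ν)) x) (EuclideanSpace.single i 1) = 0
  rw [hmain2, hMeq]
  have huv : c⁻¹ • -(c • L) = -L := by
    rw [smul_neg, smul_smul, inv_mul_cancel₀ hcpos.ne', one_smul]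
  rw [huv]
  simp
end

section
/- Let (γ_{ij})_{i,j=1}^3 be a symmetric 3×3 matrix of nonnegative real numbers with γ_{ii} = 0 for all i, satisfying the triangle inequalities γ_{ij} ≤ γ_{ik} + γ_{kj} for all i, j, k ∈ {1,2,3}. Then for all vectors p, q, r ∈ ℝ³ with nonnegative entries satisfying p_1+p_2+p_3 = q_1+q_2+q_3 = r_1+r_2+r_3 = 1, it holds that Σ_{i,j=1}^3 γ_{ij} ( p_i r_j − p_i q_j − q_i r_j ) ≤ 0. -/
/-- the core algebraic inequality behind the approximate monotonicity of
multiphase thresholding energies. -/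
theorem multiphase_triangle_inequality (γ : Fin 3 → Fin 3 → ℝ)
    (hsymm : ∀ i j, γ i j = γ j i)
    (hnonneg : ∀ i j, 0 ≤ γ i j)
    (hdiag : ∀ i, γ i i = 0)
    (htri : ∀ i j k, γ i j ≤ γ i k + γ k j)
    (p q r : Fin 3 → ℝ)
    (hp : ∀ i, 0 ≤ p i) (hq : ∀ i, 0 ≤ q i) (hr : ∀ i, 0 ≤ r i)
    (hps : ∑ i, p i = 1) (hqs : ∑ i, q i = 1) (hrs : ∑ i, r i = 1) :
    ∑ i, ∑ j, γ i j * (p i * r j - p i * q j - q i * r j) ≤ 0 := by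
  have key : ∀ a b c : Fin 3, p a * (q b * (r c * (γ a c - γ a b - γ b c))) ≤ 0 := by
    intro a b c
    nlinarith [mul_nonneg (hp a) (mul_nonneg (hq b) (hr c)), htri a c b]
  have hE : (∑ i, ∑ j, γ i j * (p i * r j - p i * q j - q i * r j))
      = ∑ a : Fin 3, ∑ b : Fin 3, ∑ c : Fin 3,
          p a * (q b * (r c * (γ a c - γ a b - γ b c))) := by
    simp only [Fin.sum_univ_three] at hps hqs hrs ⊢
    have hp2 : p 2 = 1 - p 0 - p 1 := by linarith
    have hq2 : q 2 = 1 - q 0 - q 1 := by linarith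
    have hr2 : r 2 = 1 - r 0 - r 1 := by linarith
    rw [hp2, hq2, hr2]; ring
  rw [hE]
  exact Finset.sum_nonpos fun a _ => Finset.sum_nonpos fun b _ =>
    Finset.sum_nonpos fun c _ => key a b c
end

section
/- Let A = ∪_{i=1}^n (a_i, b_i) and B = ∪_{j=1}^m (c_j, d_j) be finite unions of bounded open intervals whose closures are pairwise disjoint within each union (b_i < a_{i+1} and d_j < c_{j+1}), and assume A ∩ B = ∅. Let J_A := {a_1, b_1, …, a_n, b_n} and J_B := {c_1, d_1, …, c_m, d_m} be the sets of jump points of the indicator functions w := 1_A and w̃ := 1_B. Then for every bounded continuous function γ̂: ℝ → ℝ, lim_{h→0⁺} (1/√h) ∫_ℝ γ̂(t) w̃(t) ( w(t + √h) + w(t − √h) ) dt = Σ_{t ∈ J_A ∩ J_B} γ̂(t). -/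
open MeasureTheory Filter

lemma odl_slope_right (γ : ℝ → ℝ) (hγ : Continuous γ) (x : ℝ) :
    Tendsto (fun ε : ℝ => ε⁻¹ * ∫ t in Set.Ioo x (x + ε), γ t)
      (nhdsWithin 0 (Set.Ioi 0)) (nhds (γ x)) := by
  have hG : HasDerivAt (fun u => ∫ s in x..u, γ s) (γ x) x :=
    (hγ.integral_hasStrictDerivAt x x).hasDerivAt
  have h := hG.tendsto_slope_zero_right
  refine h.congr' ?_
  filter_upwards [self_mem_nhdsWithin] with ε (hε : 0 < ε)
  simp only [smul_eq_mul, intervalIntegral.integral_same, sub_zero]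
  rw [intervalIntegral.integral_of_le (by linarith), integral_Ioc_eq_integral_Ioo]

lemma odl_slope_left (γ : ℝ → ℝ) (hγ : Continuous γ) (x : ℝ) :
    Tendsto (fun ε : ℝ => ε⁻¹ * ∫ t in Set.Ioo (x - ε) x, γ t)
      (nhdsWithin 0 (Set.Ioi 0)) (nhds (γ x)) := by
  have hG : HasDerivAt (fun u => ∫ s in x..u, γ s) (γ x) x :=
    (hγ.integral_hasStrictDerivAt x x).hasDerivAt
  have hneg : Tendsto (fun ε : ℝ => -ε) (nhdsWithin 0 (Set.Ioi 0)) (nhdsWithin 0 (Set.Iio 0)) := by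
    apply tendsto_nhdsWithin_of_tendsto_nhds_of_eventually_within
    · simpa using (tendsto_neg_nhdsGT (a := (0:ℝ))).mono_right nhdsWithin_le_nhds
    · filter_upwards [self_mem_nhdsWithin] with ε (hε : 0 < ε); simpa using hε
  have h := hG.tendsto_slope_zero_left.comp hneg
  refine h.congr' ?_
  filter_upwards [self_mem_nhdsWithin] with ε (hε : 0 < ε)
  simp only [Function.comp, smul_eq_mul, intervalIntegral.integral_same, sub_zero]
  rw [show x + -ε = x - ε by ring, intervalIntegral.integral_symm,
    intervalIntegral.integral_of_le (by linarith), integral_Ioc_eq_integral_Ioo]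
  field_simp

lemma odl_pair_left (γ : ℝ → ℝ) (hγ : Continuous γ) (a b c d : ℝ)
    (hab : a < b) (hcd : c < d) (hdisj : b ≤ c ∨ d ≤ a) :
    Tendsto (fun ε : ℝ => ε⁻¹ * ∫ t in Set.Ioo (max c (a - ε)) (min d (b - ε)), γ t)
      (nhdsWithin 0 (Set.Ioi 0)) (nhds (if a = d then γ a else 0)) := by
  rcases hdisj with h | h
  · rw [if_neg (fun h' => by linarith)]
    refine tendsto_const_nhds.congr' ?_
    filter_upwards [self_mem_nhdsWithin] with ε (hε : 0 < ε)
    have hemp : Set.Ioo (max c (a - ε)) (min d (b - ε)) = ∅ :=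
      Set.Ioo_eq_empty (not_lt.mpr (le_trans (min_le_right _ _)
        (le_trans (by linarith) (le_max_left _ _))))
    rw [hemp, MeasureTheory.setIntegral_empty, mul_zero]
  · rcases eq_or_lt_of_le h with heq | hlt
    · rw [if_pos heq.symm]
      subst heq
      refine ((odl_slope_left γ hγ d).congr' ?_).congr (fun _ => rfl)
      filter_upwards [Ioo_mem_nhdsGT (lt_min (by linarith) (by linarith) :
          (0:ℝ) < min (d - c) (b - d))] with ε hε
      obtain ⟨hε0, hεlt⟩ := hε
      have h1 : ε < d - c := lt_of_lt_of_le hεlt (min_le_left _ _)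
      have h2 : ε < b - d := lt_of_lt_of_le hεlt (min_le_right _ _)
      rw [max_eq_right (by linarith), min_eq_left (by linarith)]
    · rw [if_neg (by intro h'; linarith)]
      refine tendsto_const_nhds.congr' ?_
      filter_upwards [Ioo_mem_nhdsGT (by linarith : (0:ℝ) < a - d)] with ε hε
      obtain ⟨hε0, hεlt⟩ := hε
      have hemp : Set.Ioo (max c (a - ε)) (min d (b - ε)) = ∅ :=
        Set.Ioo_eq_empty (not_lt.mpr (le_trans (min_le_left _ _)
          (le_trans (by linarith) (le_max_right _ _))))
      rw [hemp, MeasureTheory.setIntegral_empty, mul_zero]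

lemma odl_pair_right (γ : ℝ → ℝ) (hγ : Continuous γ) (a b c d : ℝ)
    (hab : a < b) (hcd : c < d) (hdisj : b ≤ c ∨ d ≤ a) :
    Tendsto (fun ε : ℝ => ε⁻¹ * ∫ t in Set.Ioo (max c (a + ε)) (min d (b + ε)), γ t)
      (nhdsWithin 0 (Set.Ioi 0)) (nhds (if b = c then γ b else 0)) := by
  rcases hdisj with h | h
  · rcases eq_or_lt_of_le h with heq | hlt
    · rw [if_pos heq]
      subst heq
      refine (odl_slope_right γ hγ b).congr' ?_
      filter_upwards [Ioo_mem_nhdsGT (lt_min (by linarith) (by linarith) :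
          (0:ℝ) < min (b - a) (d - b))] with ε hε
      obtain ⟨hε0, hεlt⟩ := hε
      have h1 : ε < b - a := lt_of_lt_of_le hεlt (min_le_left _ _)
      have h2 : ε < d - b := lt_of_lt_of_le hεlt (min_le_right _ _)
      rw [max_eq_left (by linarith), min_eq_right (by linarith)]
    · rw [if_neg (by intro h'; linarith)]
      refine tendsto_const_nhds.congr' ?_
      filter_upwards [Ioo_mem_nhdsGT (by linarith : (0:ℝ) < c - b)] with ε hε
      obtain ⟨hε0, hεlt⟩ := hε
      have hemp : Set.Ioo (max c (a + ε)) (min d (b + ε)) = ∅ :=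
        Set.Ioo_eq_empty (not_lt.mpr (le_trans (min_le_right _ _)
          (le_trans (by linarith) (le_max_left _ _))))
      rw [hemp, MeasureTheory.setIntegral_empty, mul_zero]
  · rw [if_neg (fun h' => by linarith)]
    refine tendsto_const_nhds.congr' ?_
    filter_upwards [self_mem_nhdsWithin] with ε (hε : 0 < ε)
    have hemp : Set.Ioo (max c (a + ε)) (min d (b + ε)) = ∅ :=
      Set.Ioo_eq_empty (not_lt.mpr (le_trans (min_le_left _ _)
        (le_trans (by linarith) (le_max_right _ _))))
    rw [hemp, MeasureTheory.setIntegral_empty, mul_zero]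

lemma odl_prod_sub (γ : ℝ → ℝ) (a b c d ε t : ℝ) :
    γ t * (Set.indicator (Set.Ioo c d) (1 : ℝ → ℝ) t *
      Set.indicator (Set.Ioo a b) (1 : ℝ → ℝ) (t + ε)) =
    Set.indicator (Set.Ioo (max c (a - ε)) (min d (b - ε))) γ t := by
  have hiff : t ∈ Set.Ioo (max c (a - ε)) (min d (b - ε)) ↔
      t ∈ Set.Ioo c d ∧ t + ε ∈ Set.Ioo a b := by
    simp only [Set.mem_Ioo, max_lt_iff, lt_min_iff]
    constructor
    · rintro ⟨⟨hc, ha⟩, hd, hb⟩; exact ⟨⟨hc, hd⟩, by linarith, by linarith⟩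
    · rintro ⟨⟨hc, hd⟩, ha, hb⟩; exact ⟨⟨hc, by linarith⟩, hd, by linarith⟩
  by_cases h1 : t ∈ Set.Ioo c d
  · by_cases h2 : t + ε ∈ Set.Ioo a b
    · rw [Set.indicator_of_mem h1, Set.indicator_of_mem h2,
        Set.indicator_of_mem (hiff.mpr ⟨h1, h2⟩)]
      simp
    · rw [Set.indicator_of_notMem h2,
        Set.indicator_of_notMem (fun hm => h2 (hiff.mp hm).2), mul_zero, mul_zero]
  · rw [Set.indicator_of_notMem h1,
      Set.indicator_of_notMem (fun hm => h1 (hiff.mp hm).1), zero_mul, mul_zero]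

lemma odl_prod_add (γ : ℝ → ℝ) (a b c d ε t : ℝ) :
    γ t * (Set.indicator (Set.Ioo c d) (1 : ℝ → ℝ) t *
      Set.indicator (Set.Ioo a b) (1 : ℝ → ℝ) (t - ε)) =
    Set.indicator (Set.Ioo (max c (a + ε)) (min d (b + ε))) γ t := by
  have hiff : t ∈ Set.Ioo (max c (a + ε)) (min d (b + ε)) ↔
      t ∈ Set.Ioo c d ∧ t - ε ∈ Set.Ioo a b := by
    simp only [Set.mem_Ioo, max_lt_iff, lt_min_iff]
    constructor
    · rintro ⟨⟨hc, ha⟩, hd, hb⟩; exact ⟨⟨hc, hd⟩, by linarith, by linarith⟩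
    · rintro ⟨⟨hc, hd⟩, ha, hb⟩; exact ⟨⟨hc, by linarith⟩, hd, by linarith⟩
  by_cases h1 : t ∈ Set.Ioo c d
  · by_cases h2 : t - ε ∈ Set.Ioo a b
    · rw [Set.indicator_of_mem h1, Set.indicator_of_mem h2,
        Set.indicator_of_mem (hiff.mpr ⟨h1, h2⟩)]
      simp
    · rw [Set.indicator_of_notMem h2,
        Set.indicator_of_notMem (fun hm => h2 (hiff.mp hm).2), mul_zero, mul_zero]
  · rw [Set.indicator_of_notMem h1,
      Set.indicator_of_notMem (fun hm => h1 (hiff.mp hm).1), zero_mul, mul_zero]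

/-- the one-dimensional localization lemma. For disjoint finite unions of
separated open intervals `A` and `B` with jump sets `J_A`, `J_B`, and any bounded continuous
`γ̂`, the rescaled two-sided overlap integral converges, as `h → 0⁺`, to the sum of `γ̂` over
the common jump points `J_A ∩ J_B`. -/
theorem one_dimensional_localization (n m : ℕ)
    (a b : Fin n → ℝ) (c d : Fin m → ℝ)
    (hab : ∀ i, a i < b i) (hcd : ∀ j, c j < d j)
    (hsepA : ∀ i j : Fin n, i < j → b i < a j)
    (hsepB : ∀ i j : Fin m, i < j → d i < c j)
    (A B : Set ℝ)
    (hA : A = ⋃ i, Set.Ioo (a i) (b i))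
    (hB : B = ⋃ j, Set.Ioo (c j) (d j))
    (hdisj : A ∩ B = ∅)
    (JA JB : Finset ℝ)
    (hJA : JA = Finset.image a Finset.univ ∪ Finset.image b Finset.univ)
    (hJB : JB = Finset.image c Finset.univ ∪ Finset.image d Finset.univ)
    (γhat : ℝ → ℝ) (hγcont : Continuous γhat) (hγbdd : ∃ M, ∀ t, |γhat t| ≤ M) :
    Tendsto (fun h : ℝ => (Real.sqrt h)⁻¹ *
        ∫ t, γhat t * Set.indicator B 1 t *
          (Set.indicator A 1 (t + Real.sqrt h) + Set.indicator A 1 (t - Real.sqrt h)))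
      (nhdsWithin 0 (Set.Ioi 0))
      (nhds (∑ t ∈ JA ∩ JB, γhat t)) := by
  classical
  -- pairwise separation of an A-interval and a B-interval
  have hpair : ∀ (i : Fin n) (j : Fin m), b i ≤ c j ∨ d j ≤ a i := by
    intro i j
    by_contra hcon
    push_neg at hcon
    obtain ⟨h1, h2⟩ := hcon
    set x := (max (a i) (c j) + min (b i) (d j)) / 2 with hx
    have h3 : max (a i) (c j) < min (b i) (d j) := max_lt (lt_min (hab i) h2) (lt_min h1 (hcd j))
    have hx1 : x ∈ Set.Ioo (a i) (b i) :=
      ⟨by have := le_max_left (a i) (c j); have := min_le_left (b i) (d j); simp only [hx]; linarith,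
       by have := le_max_left (a i) (c j); have := min_le_left (b i) (d j); simp only [hx]; linarith⟩
    have hx2 : x ∈ Set.Ioo (c j) (d j) :=
      ⟨by have := le_max_right (a i) (c j); have := min_le_right (b i) (d j); simp only [hx]; linarith,
       by have := le_max_right (a i) (c j); have := min_le_right (b i) (d j); simp only [hx]; linarith⟩
    have hxAB : x ∈ A ∩ B :=
      ⟨hA ▸ Set.mem_iUnion.2 ⟨i, hx1⟩, hB ▸ Set.mem_iUnion.2 ⟨j, hx2⟩⟩
    rw [hdisj] at hxAB
    exact hxAB
  -- indicator decompositions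
  have hBind : ∀ t : ℝ, Set.indicator B (1 : ℝ → ℝ) t =
      ∑ j : Fin m, Set.indicator (Set.Ioo (c j) (d j)) (1 : ℝ → ℝ) t := by
    intro t
    by_cases ht : t ∈ B
    · rw [Set.indicator_of_mem ht]
      obtain ⟨j0, hj0⟩ := Set.mem_iUnion.1 (hB ▸ ht)
      rw [Finset.sum_eq_single_of_mem j0 (Finset.mem_univ _)]
      · rw [Set.indicator_of_mem hj0]
      · intro j _ hj
        apply Set.indicator_of_notMem
        intro hjmem
        rcases lt_or_gt_of_ne hj with hlt | hlt
        · have := hsepB j j0 hlt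
          have := hjmem.2; have := hj0.1; simp only [Set.mem_Ioo] at *; linarith
        · have := hsepB j0 j hlt
          have := hjmem.1; have := hj0.2; simp only [Set.mem_Ioo] at *; linarith
    · rw [Set.indicator_of_notMem ht, Finset.sum_eq_zero]
      intro j _
      exact Set.indicator_of_notMem (fun hm => ht (hB ▸ Set.mem_iUnion.2 ⟨j, hm⟩)) _
  have hAind : ∀ s : ℝ, Set.indicator A (1 : ℝ → ℝ) s =
      ∑ i : Fin n, Set.indicator (Set.Ioo (a i) (b i)) (1 : ℝ → ℝ) s := by
    intro s
    by_cases hs : s ∈ A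
    · rw [Set.indicator_of_mem hs]
      obtain ⟨i0, hi0⟩ := Set.mem_iUnion.1 (hA ▸ hs)
      rw [Finset.sum_eq_single_of_mem i0 (Finset.mem_univ _)]
      · rw [Set.indicator_of_mem hi0]
      · intro i _ hi
        apply Set.indicator_of_notMem
        intro himem
        rcases lt_or_gt_of_ne hi with hlt | hlt
        · have := hsepA i i0 hlt
          have := himem.2; have := hi0.1; simp only [Set.mem_Ioo] at *; linarith
        · have := hsepA i0 i hlt
          have := himem.1; have := hi0.2; simp only [Set.mem_Ioo] at *; linarith
    · rw [Set.indicator_of_notMem hs, Finset.sum_eq_zero]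
      intro i _
      exact Set.indicator_of_notMem (fun hm => hs (hA ▸ Set.mem_iUnion.2 ⟨i, hm⟩)) _
  -- integrability of indicator pieces
  have hintg : ∀ p q : ℝ, Integrable (Set.indicator (Set.Ioo p q) γhat) := fun p q =>
    (hγcont.integrableOn_Icc.mono_set Set.Ioo_subset_Icc_self).integrable_indicator
      measurableSet_Ioo
  -- the integral identity
  have hint : ∀ ε : ℝ,
      (∫ t, γhat t * Set.indicator B 1 t *
          (Set.indicator A 1 (t + ε) + Set.indicator A 1 (t - ε))) =
      ∑ i : Fin n, ∑ j : Fin m,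
        ((∫ t in Set.Ioo (max (c j) (a i - ε)) (min (d j) (b i - ε)), γhat t)
          + ∫ t in Set.Ioo (max (c j) (a i + ε)) (min (d j) (b i + ε)), γhat t) := by
    intro ε
    have hptwise : ∀ t : ℝ, γhat t * Set.indicator B 1 t *
        (Set.indicator A 1 (t + ε) + Set.indicator A 1 (t - ε)) =
        ∑ i : Fin n, ∑ j : Fin m,
          (Set.indicator (Set.Ioo (max (c j) (a i - ε)) (min (d j) (b i - ε))) γhat t
            + Set.indicator (Set.Ioo (max (c j) (a i + ε)) (min (d j) (b i + ε))) γhat t) := by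
      intro t
      rw [hBind t, hAind (t + ε), hAind (t - ε), ← Finset.sum_add_distrib, mul_assoc,
        Finset.sum_mul_sum]
      simp only [Finset.mul_sum]
      rw [Finset.sum_comm]
      refine Finset.sum_congr rfl fun i _ => Finset.sum_congr rfl fun j _ => ?_
      rw [mul_add, mul_add, odl_prod_sub γhat (a i) (b i) (c j) (d j) ε t,
        odl_prod_add γhat (a i) (b i) (c j) (d j) ε t]
    refine (MeasureTheory.integral_congr_ae (Filter.Eventually.of_forall hptwise)).trans ?_
    refine (MeasureTheory.integral_finset_sum Finset.univ
      (f := fun (i : Fin n) (x : ℝ) => ∑ j : Fin m,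
        (Set.indicator (Set.Ioo (max (c j) (a i - ε)) (min (d j) (b i - ε))) γhat x
          + Set.indicator (Set.Ioo (max (c j) (a i + ε)) (min (d j) (b i + ε))) γhat x))
      (fun i _ => integrable_finset_sum _ (fun j _ => (hintg _ _).add (hintg _ _)))).trans ?_
    refine Finset.sum_congr rfl fun i _ => ?_
    refine (MeasureTheory.integral_finset_sum Finset.univ
      (f := fun (j : Fin m) (x : ℝ) =>
        Set.indicator (Set.Ioo (max (c j) (a i - ε)) (min (d j) (b i - ε))) γhat x
          + Set.indicator (Set.Ioo (max (c j) (a i + ε)) (min (d j) (b i + ε))) γhat x)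
      (fun j _ => (hintg _ _).add (hintg _ _))).trans ?_
    refine Finset.sum_congr rfl fun j _ => ?_
    rw [MeasureTheory.integral_add (hintg _ _) (hintg _ _),
      MeasureTheory.integral_indicator measurableSet_Ioo,
      MeasureTheory.integral_indicator measurableSet_Ioo]
  -- injectivity and disjointness facts
  have haS : StrictMono a := fun i i' h => lt_trans (hab i) (hsepA i i' h)
  have hdS : StrictMono d := fun j j' h => lt_trans (hsepB j j' h) (hcd j')
  have hcS : StrictMono c := fun j j' h => lt_trans (hcd j) (hsepB j j' h)
  have hbS : StrictMono b := fun i i' h => lt_trans (hsepA i i' h) (hab i')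
  have hane_b : ∀ i i', a i ≠ b i' := by
    intro i i' h
    rcases lt_trichotomy i i' with h1 | h1 | h1
    · have := hab i; have := hsepA i i' h1; have := hab i'; linarith
    · subst h1; exact absurd h (ne_of_lt (hab i))
    · have := hsepA i' i h1; have := hab i'; linarith
  have hane_c : ∀ i j, a i ≠ c j := by
    intro i j h
    rcases hpair i j with h2 | h2 <;> (have := hab i; have := hcd j; linarith)
  have hbne_d : ∀ i j, b i ≠ d j := by
    intro i j h
    rcases hpair i j with h2 | h2 <;> (have := hab i; have := hcd j; linarith)
  -- the combinatorial identity
  have hsum : (∑ i : Fin n, ∑ j : Fin m,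
      ((if a i = d j then γhat (a i) else 0) + (if b i = c j then γhat (b i) else 0))) =
      ∑ t ∈ JA ∩ JB, γhat t := by
    have hprod : (∑ i : Fin n, ∑ j : Fin m,
        ((if a i = d j then γhat (a i) else 0) + (if b i = c j then γhat (b i) else 0))) =
        ∑ p : Fin n × Fin m,
          ((if a p.1 = d p.2 then γhat (a p.1) else 0)
            + (if b p.1 = c p.2 then γhat (b p.1) else 0)) := by
      rw [Fintype.sum_prod_type]
    rw [hprod, Finset.sum_add_distrib]
    set E1 : Finset ℝ := (Finset.univ.filter
      (fun p : Fin n × Fin m => a p.1 = d p.2)).image (fun p => a p.1) with hE1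
    set E2 : Finset ℝ := (Finset.univ.filter
      (fun p : Fin n × Fin m => b p.1 = c p.2)).image (fun p => b p.1) with hE2
    have h1 : (∑ p : Fin n × Fin m, if a p.1 = d p.2 then γhat (a p.1) else 0) =
        ∑ t ∈ E1, γhat t := by
      rw [← Finset.sum_filter, hE1, Finset.sum_image]
      intro p hp q hq hpq
      simp only [Finset.mem_coe, Finset.mem_filter] at hp hq
      have h1 : p.1 = q.1 := haS.injective hpq
      have h2 : p.2 = q.2 := hdS.injective (by rw [← hp.2, ← hq.2, h1])
      exact Prod.ext h1 h2
    have h2 : (∑ p : Fin n × Fin m, if b p.1 = c p.2 then γhat (b p.1) else 0) =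
        ∑ t ∈ E2, γhat t := by
      rw [← Finset.sum_filter, hE2, Finset.sum_image]
      intro p hp q hq hpq
      simp only [Finset.mem_coe, Finset.mem_filter] at hp hq
      have h1 : p.1 = q.1 := hbS.injective hpq
      have h2 : p.2 = q.2 := hcS.injective (by rw [← hp.2, ← hq.2, h1])
      exact Prod.ext h1 h2
    have hdisjE : Disjoint E1 E2 := by
      rw [Finset.disjoint_left]
      intro t ht1 ht2
      simp only [hE1, hE2, Finset.mem_image, Finset.mem_filter, Finset.mem_univ,
        true_and] at ht1 ht2
      obtain ⟨p, hp1, hp2⟩ := ht1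
      obtain ⟨q, hq1, hq2⟩ := ht2
      exact hane_b p.1 q.1 (hp2.trans hq2.symm)
    have hE : E1 ∪ E2 = JA ∩ JB := by
      ext t
      simp only [hE1, hE2, hJA, hJB, Finset.mem_union, Finset.mem_inter, Finset.mem_image,
        Finset.mem_filter, Finset.mem_univ, true_and]
      constructor
      · rintro (⟨p, hp1, hp2⟩ | ⟨p, hp1, hp2⟩)
        · exact ⟨Or.inl ⟨p.1, hp2⟩, Or.inr ⟨p.2, by rw [← hp1]; exact hp2⟩⟩
        · exact ⟨Or.inr ⟨p.1, hp2⟩, Or.inl ⟨p.2, by rw [← hp1]; exact hp2⟩⟩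
      · rintro ⟨hA' | hA', hB' | hB'⟩
        · obtain ⟨i, hi⟩ := hA'; obtain ⟨j, hj⟩ := hB'
          exact absurd (hi.trans hj.symm) (hane_c i j)
        · obtain ⟨i, hi⟩ := hA'; obtain ⟨j, hj⟩ := hB'
          exact Or.inl ⟨(i, j), hi.trans hj.symm, hi⟩
        · obtain ⟨i, hi⟩ := hA'; obtain ⟨j, hj⟩ := hB'
          exact Or.inr ⟨(i, j), hi.trans hj.symm, hi⟩
        · obtain ⟨i, hi⟩ := hA'; obtain ⟨j, hj⟩ := hB'
          exact absurd (hi.trans hj.symm) (hbne_d i j)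
    rw [h1, h2, ← Finset.sum_union hdisjE, hE]
  -- the main limit in ε
  have hmain : Tendsto (fun ε : ℝ => ε⁻¹ *
      ∫ t, γhat t * Set.indicator B 1 t *
        (Set.indicator A 1 (t + ε) + Set.indicator A 1 (t - ε)))
      (nhdsWithin 0 (Set.Ioi 0)) (nhds (∑ t ∈ JA ∩ JB, γhat t)) := by
    have hfun : (fun ε : ℝ => ε⁻¹ *
        ∫ t, γhat t * Set.indicator B 1 t *
          (Set.indicator A 1 (t + ε) + Set.indicator A 1 (t - ε))) =
        fun ε : ℝ => ∑ i : Fin n, ∑ j : Fin m,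
          ((ε⁻¹ * ∫ t in Set.Ioo (max (c j) (a i - ε)) (min (d j) (b i - ε)), γhat t)
            + ε⁻¹ * ∫ t in Set.Ioo (max (c j) (a i + ε)) (min (d j) (b i + ε)), γhat t) := by
      funext ε
      rw [hint ε, Finset.mul_sum]
      refine Finset.sum_congr rfl fun i _ => ?_
      rw [Finset.mul_sum]
      exact Finset.sum_congr rfl fun j _ => mul_add _ _ _
    rw [hfun, ← hsum]
    refine tendsto_finset_sum _ fun i _ => ?_
    refine tendsto_finset_sum _ fun j _ => ?_
    exact (odl_pair_left γhat hγcont (a i) (b i) (c j) (d j) (hab i) (hcd j)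
      (hpair i j)).add (odl_pair_right γhat hγcont (a i) (b i) (c j) (d j) (hab i) (hcd j)
      (hpair i j))
  -- reduce h → √h
  have hsqrt : Tendsto Real.sqrt (nhdsWithin 0 (Set.Ioi 0)) (nhdsWithin 0 (Set.Ioi 0)) := by
    apply tendsto_nhdsWithin_of_tendsto_nhds_of_eventually_within
    · exact (Real.continuous_sqrt.tendsto' 0 0 (by simp)).mono_left nhdsWithin_le_nhds
    · filter_upwards [self_mem_nhdsWithin] with h (hh : 0 < h)
      exact Real.sqrt_pos.2 hh
  exact hmain.comp hsqrt
end

section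
/- Let φ° be an admissible anisotropy on an open set U ⊆ ℝ^d, let u ∈ C²(U) with ∇u(x) ≠ 0 on U, and set ν := ∇u/|∇u| (a C¹ unit vector field on U). Let ξ_τ be a C¹ vector field on U with ξ_τ(x) · ν(x) = 0 for all x ∈ U. Then at every point x ∈ U, Σ_{i,j=1}^d ∂_{ν_i}φ°(x, ν(x)) ( ∂_{x_j}ν^i(x) − ∂_{x_i}ν^j(x) ) ξ_τ^j(x) = φ°(x, ν(x)) Σ_{j,k=1}^d ν^k(x) ∂_{x_k}ξ_τ^j(x) ν^j(x). -/
open MeasureTheory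

section antisymmetric_helpers

open Topology

variable {d : ℕ}

private lemma inner_eq_sum' (a b : EuclideanSpace ℝ (Fin d)) :
    (inner ℝ a b : ℝ) = ∑ i, a i * b i := by
  simp [PiLp.inner_apply, RCLike.inner_apply]
  exact Finset.sum_congr rfl fun i _ => mul_comm _ _

private lemma coord_eq_inner (v : EuclideanSpace ℝ (Fin d)) (i : Fin d) :
    v i = (inner ℝ (EuclideanSpace.single i (1:ℝ)) v : ℝ) := by
  rw [EuclideanSpace.inner_single_left]; simp

private lemma comp_decomp (L : EuclideanSpace ℝ (Fin d) →L[ℝ] EuclideanSpace ℝ (Fin d))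
    (w : EuclideanSpace ℝ (Fin d)) (i : Fin d) :
    L w i = ∑ j, w j * L (EuclideanSpace.single j 1) i := by
  rw [coord_eq_inner (L w) i]
  conv_lhs => rw [← (EuclideanSpace.basisFun (Fin d) ℝ).sum_repr w]
  rw [map_sum, inner_sum]
  refine Finset.sum_congr rfl fun j _ => ?_
  rw [EuclideanSpace.basisFun_repr, EuclideanSpace.basisFun_apply, _root_.map_smul,
    real_inner_smul_right, coord_eq_inner (L (EuclideanSpace.single j 1)) i]

private lemma grad_fderiv_symm (U : Set (EuclideanSpace ℝ (Fin d))) (hU : IsOpen U)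
    (u : EuclideanSpace ℝ (Fin d) → ℝ) (hu : ContDiffOn ℝ 2 u U)
    (x : EuclideanSpace ℝ (Fin d)) (hx : x ∈ U) :
    ∃ H : EuclideanSpace ℝ (Fin d) →L[ℝ] EuclideanSpace ℝ (Fin d),
      HasFDerivAt (gradient u) H x ∧ ∀ v w : EuclideanSpace ℝ (Fin d),
        (inner ℝ (H v) w : ℝ) = inner ℝ (H w) v := by
  have hxnhds : U ∈ 𝓝 x := hU.mem_nhds hx
  have huC2 : ContDiffAt ℝ 2 u x := hu.contDiffAt hxnhds
  have hfd : ContDiffAt ℝ 1 (fderiv ℝ u) x := huC2.fderiv_right (by norm_num)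
  set f'' := fderiv ℝ (fderiv ℝ u) x with hf''
  have happly : ∀ v w : EuclideanSpace ℝ (Fin d), f'' v w = f'' w v :=
    huC2.isSymmSndFDerivAt (by simp)
  set e : Fin d → EuclideanSpace ℝ (Fin d) := fun i => EuclideanSpace.single i 1 with he
  have hgfun : gradient u = fun y => ∑ i, (fderiv ℝ u y (e i)) • e i := by
    funext y
    conv_lhs => rw [← (EuclideanSpace.basisFun (Fin d) ℝ).sum_repr' (gradient u y)]
    refine Finset.sum_congr rfl fun i _ => ?_
    rw [EuclideanSpace.basisFun_apply]
    congr 1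
    rw [real_inner_comm]
    exact InnerProductSpace.toDual_symm_apply
  set A : Fin d → (EuclideanSpace ℝ (Fin d) →L[ℝ] ℝ) := fun i =>
    (ContinuousLinearMap.apply ℝ ℝ (e i)).comp f'' with hA
  refine ⟨∑ i, (A i).smulRight (e i), ?_, ?_⟩
  · rw [hgfun]
    refine HasFDerivAt.fun_sum fun i _ => ?_
    have hci : HasFDerivAt (fun y => fderiv ℝ u y (e i)) (A i) x :=
      (ContinuousLinearMap.apply ℝ ℝ (e i)).hasFDerivAt.comp x
        (hfd.differentiableAt one_ne_zero).hasFDerivAt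
    simpa using hci.fun_smul (hasFDerivAt_const (e i) x)
  · intro v w
    have hHv : ∀ v : EuclideanSpace ℝ (Fin d),
        (∑ i, (A i).smulRight (e i)) v = ∑ i, (f'' v (e i)) • e i := by
      intro v
      simp [ContinuousLinearMap.sum_apply, ContinuousLinearMap.smulRight_apply, hA]
    have hinner : ∀ v w : EuclideanSpace ℝ (Fin d),
        (inner ℝ ((∑ i, (A i).smulRight (e i)) v) w : ℝ) = f'' v w := by
      intro v w
      rw [hHv, sum_inner]
      have : ∀ i, (inner ℝ ((f'' v (e i)) • e i) w : ℝ) = f'' v (e i) * w i := by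
        intro i
        rw [real_inner_smul_left, he]
        simp [EuclideanSpace.inner_single_left]
      simp_rw [this]
      conv_rhs => rw [← (EuclideanSpace.basisFun (Fin d) ℝ).sum_repr w]
      rw [map_sum]
      refine Finset.sum_congr rfl fun i _ => ?_
      rw [EuclideanSpace.basisFun_repr, EuclideanSpace.basisFun_apply, _root_.map_smul]
      simp [mul_comm, he]
    rw [hinner, hinner, happly]

end antisymmetric_helpers

open Topology in
/-- the antisymmetric-part identity \eqref{antisymmetric term}:
for `ν = ∇u/|∇u|` and a tangential `C¹` field `ξτ`,
`Σ_{i,j} ∂_{ν_i}φ°(x,ν) (∂_{x_j}ν^i - ∂_{x_i}ν^j) ξτ^j = φ°(x,ν) Σ_{j,k} ν^k ∂_{x_k}ξτ^j ν^j`. -/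
theorem antisymmetric_part_identity {d : ℕ}
    (U : Set (EuclideanSpace ℝ (Fin d))) (hU : IsOpen U)
    (φd : EuclideanSpace ℝ (Fin d) → EuclideanSpace ℝ (Fin d) → ℝ)
    (hφd : IsAdmissibleAnisotropy U φd)
    (u : EuclideanSpace ℝ (Fin d) → ℝ) (hu : ContDiffOn ℝ 2 u U)
    (hgrad : ∀ x ∈ U, gradient u x ≠ 0)
    (ν : EuclideanSpace ℝ (Fin d) → EuclideanSpace ℝ (Fin d))
    (hν : ∀ x, ν x = ‖gradient u x‖⁻¹ • gradient u x)
    (ξτ : EuclideanSpace ℝ (Fin d) → EuclideanSpace ℝ (Fin d))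
    (hξτ : ContDiffOn ℝ 1 ξτ U)
    (horth : ∀ x ∈ U, (inner ℝ (ξτ x) (ν x) : ℝ) = 0)
    (x : EuclideanSpace ℝ (Fin d)) (hx : x ∈ U) :
    ∑ i : Fin d, ∑ j : Fin d, gradient (φd x) (ν x) i *
        (fderiv ℝ ν x (EuclideanSpace.single j 1) i
          - fderiv ℝ ν x (EuclideanSpace.single i 1) j) * ξτ x j
      = φd x (ν x) *
          ∑ j : Fin d, ∑ k : Fin d,
            ν x k * fderiv ℝ ξτ x (EuclideanSpace.single k 1) j * ν x j := by
  classical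
  have hxnhds : U ∈ 𝓝 x := hU.mem_nhds hx
  have hG0 : gradient u x ≠ 0 := hgrad x hx
  have hn0 : ‖gradient u x‖ ≠ 0 := norm_ne_zero_iff.mpr hG0
  obtain ⟨H, hH, hsym⟩ := grad_fderiv_symm U hU u hu x hx
  have hgdiff : DifferentiableAt ℝ (gradient u) x := hH.differentiableAt
  have hrdiff : DifferentiableAt ℝ (fun y => ‖gradient u y‖⁻¹) x :=
    (hgdiff.norm ℝ hG0).inv hn0
  set dr := fderiv ℝ (fun y => ‖gradient u y‖⁻¹) x with hdrdef
  have hνfun : ν = fun y => ‖gradient u y‖⁻¹ • gradient u y := funext hν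
  have hνhas : HasFDerivAt ν
      (‖gradient u x‖⁻¹ • H + dr.smulRight (gradient u x)) x := by
    rw [hνfun]
    exact hrdiff.hasFDerivAt.smul hH
  have hνdiff : DifferentiableAt ℝ ν x := hνhas.differentiableAt
  have hDν : ∀ v, fderiv ℝ ν x v = ‖gradient u x‖⁻¹ • H v + dr v • gradient u x := by
    intro v; rw [hνhas.fderiv]; simp
  -- ⟪Dν v, ν x⟫ = 0 for all v
  have hunit : ∀ v, (inner ℝ (fderiv ℝ ν x v) (ν x) : ℝ) = 0 := by
    intro v
    have heq : (fun y => (inner ℝ (ν y) (ν y) : ℝ)) =ᶠ[𝓝 x] fun _ => (1:ℝ) := by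
      filter_upwards [hxnhds] with y hy
      have h0 : gradient u y ≠ 0 := hgrad y hy
      have hny : ‖gradient u y‖ ≠ 0 := norm_ne_zero_iff.mpr h0
      rw [hν y, real_inner_smul_left, real_inner_smul_right, real_inner_self_eq_norm_sq]
      field_simp
    have h0 : fderiv ℝ (fun y => (inner ℝ (ν y) (ν y) : ℝ)) x = 0 := by
      rw [heq.fderiv_eq]; simp
    have h1 := fderiv_inner_apply (𝕜 := ℝ) hνdiff hνdiff v
    rw [h0] at h1
    simp only [ContinuousLinearMap.zero_apply] at h1
    have hc : (inner ℝ (ν x) (fderiv ℝ ν x v) : ℝ) = inner ℝ (fderiv ℝ ν x v) (ν x) :=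
      real_inner_comm _ _
    linarith
  -- differentiated orthogonality
  have hξdiff : DifferentiableAt ℝ ξτ x := (hξτ.contDiffAt hxnhds).differentiableAt one_ne_zero
  have horthD : ∀ v, (inner ℝ (ξτ x) (fderiv ℝ ν x v) : ℝ)
      + inner ℝ (fderiv ℝ ξτ x v) (ν x) = 0 := by
    intro v
    have heq : (fun y => (inner ℝ (ξτ y) (ν y) : ℝ)) =ᶠ[𝓝 x] fun _ => (0:ℝ) := by
      filter_upwards [hxnhds] with y hy; exact horth y hy
    have h0 : fderiv ℝ (fun y => (inner ℝ (ξτ y) (ν y) : ℝ)) x = 0 := by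
      rw [heq.fderiv_eq]; simp
    have h1 := fderiv_inner_apply (𝕜 := ℝ) hξdiff hνdiff v
    rw [h0] at h1
    simp only [ContinuousLinearMap.zero_apply] at h1
    linarith
  -- ν x is a unit vector
  have hV1 : ‖ν x‖ = 1 := by
    rw [hν x, norm_smul, norm_inv, norm_norm]
    field_simp
  have hV0 : ν x ≠ 0 := by
    intro h; rw [h] at hV1; simp at hV1
  -- differentiability of φd x at ν x
  have hφdiff : DifferentiableAt ℝ (φd x) (ν x) := by
    have hopen : IsOpen (U ×ˢ ({(0 : EuclideanSpace ℝ (Fin d))}ᶜ)) :=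
      hU.prod isOpen_compl_singleton
    have hmem : (x, ν x) ∈ U ×ˢ ({(0 : EuclideanSpace ℝ (Fin d))}ᶜ) := ⟨hx, hV0⟩
    have hC : ContDiffAt ℝ 2 (fun p : EuclideanSpace ℝ (Fin d) × EuclideanSpace ℝ (Fin d) =>
        φd p.1 p.2) (x, ν x) := hφd.smooth.contDiffAt (hopen.mem_nhds hmem)
    have hC2 : ContDiffAt ℝ 2 (φd x) (ν x) :=
      hC.comp (ν x) (ContDiffAt.prodMk contDiffAt_const contDiffAt_id)
    exact hC2.differentiableAt (by norm_num)
  -- Euler identity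
  have hEuler : (inner ℝ (gradient (φd x) (ν x)) (ν x) : ℝ) = φd x (ν x) := by
    have hsmul : HasDerivAt (fun t : ℝ => t • (ν x)) (ν x) 1 := by
      simpa using (hasDerivAt_id (1:ℝ)).smul_const (ν x)
    have hF : HasFDerivAt (φd x) (fderiv ℝ (φd x) (ν x)) ((fun t : ℝ => t • ν x) 1) := by
      simpa using hφdiff.hasFDerivAt
    have hcomp : HasDerivAt (fun t : ℝ => φd x (t • ν x))
        (fderiv ℝ (φd x) (ν x) (ν x)) 1 := hF.comp_hasDerivAt 1 hsmul
    have heq2 : (fun t : ℝ => φd x (t • ν x)) =ᶠ[𝓝 (1:ℝ)]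
        fun t => t * φd x (ν x) := by
      filter_upwards [lt_mem_nhds (show (0:ℝ) < 1 by norm_num)] with t ht
      rw [hφd.homogeneous x hx (ν x) t, abs_of_pos ht]
    have hlin : HasDerivAt (fun t : ℝ => t * φd x (ν x)) (φd x (ν x)) 1 := by
      simpa using (hasDerivAt_id (1:ℝ)).mul_const (φd x (ν x))
    have h3 : HasDerivAt (fun t : ℝ => φd x (t • ν x)) (φd x (ν x)) 1 :=
      hlin.congr_of_eventuallyEq heq2
    have h4 : φd x (ν x) = fderiv ℝ (φd x) (ν x) (ν x) := h3.unique hcomp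
    have h5 : (inner ℝ (gradient (φd x) (ν x)) (ν x) : ℝ) = fderiv ℝ (φd x) (ν x) (ν x) :=
      InnerProductSpace.toDual_symm_apply
    rw [h5, ← h4]
  -- orthogonality ⟪ξτ x, ∇u x⟫ = 0
  have hGΞ : (inner ℝ (ξτ x) (gradient u x) : ℝ) = 0 := by
    have h := horth x hx
    rw [hν x, real_inner_smul_right] at h
    rcases mul_eq_zero.mp h with h' | h'
    · exact absurd h' (inv_ne_zero hn0)
    · exact h'
  -- now the algebra
  have hrow : ∀ i, (∑ j, gradient (φd x) (ν x) i *
        (fderiv ℝ ν x (EuclideanSpace.single j 1) i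
          - fderiv ℝ ν x (EuclideanSpace.single i 1) j) * ξτ x j)
      = gradient (φd x) (ν x) i * (fderiv ℝ ν x (ξτ x) i)
        - gradient (φd x) (ν x) i *
          (inner ℝ (fderiv ℝ ν x (EuclideanSpace.single i 1)) (ξτ x) : ℝ) := by
    intro i
    rw [comp_decomp (fderiv ℝ ν x) (ξτ x) i, inner_eq_sum', Finset.mul_sum, Finset.mul_sum,
      ← Finset.sum_sub_distrib]
    refine Finset.sum_congr rfl fun j _ => ?_
    ring
  have hB : ∀ i, (inner ℝ (fderiv ℝ ν x (EuclideanSpace.single i 1)) (ξτ x) : ℝ)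
      = ‖gradient u x‖⁻¹ * (H (ξτ x) i) := by
    intro i
    rw [hDν (EuclideanSpace.single i 1), inner_add_left, real_inner_smul_left,
      real_inner_smul_left]
    have h2 : (inner ℝ (gradient u x) (ξτ x) : ℝ) = 0 := by
      rw [real_inner_comm]; exact hGΞ
    rw [h2, hsym (EuclideanSpace.single i 1) (ξτ x), EuclideanSpace.inner_single_right]
    simp
  have hPDν : (inner ℝ (gradient (φd x) (ν x)) (fderiv ℝ ν x (ξτ x)) : ℝ)
      = ‖gradient u x‖⁻¹ * (inner ℝ (gradient (φd x) (ν x)) (H (ξτ x)) : ℝ)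
        + dr (ξτ x) * (inner ℝ (gradient (φd x) (ν x)) (gradient u x) : ℝ) := by
    rw [hDν (ξτ x), inner_add_right, real_inner_smul_right, real_inner_smul_right]
  have hLHS : (∑ i : Fin d, ∑ j : Fin d, gradient (φd x) (ν x) i *
        (fderiv ℝ ν x (EuclideanSpace.single j 1) i
          - fderiv ℝ ν x (EuclideanSpace.single i 1) j) * ξτ x j)
      = dr (ξτ x) * (inner ℝ (gradient (φd x) (ν x)) (gradient u x) : ℝ) := by
    simp_rw [hrow, hB]
    rw [Finset.sum_sub_distrib]
    have h1 : (∑ i, gradient (φd x) (ν x) i * fderiv ℝ ν x (ξτ x) i)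
        = (inner ℝ (gradient (φd x) (ν x)) (fderiv ℝ ν x (ξτ x)) : ℝ) :=
      (inner_eq_sum' _ _).symm
    have h2 : (∑ i, gradient (φd x) (ν x) i * (‖gradient u x‖⁻¹ * H (ξτ x) i))
        = ‖gradient u x‖⁻¹ * (inner ℝ (gradient (φd x) (ν x)) (H (ξτ x)) : ℝ) := by
      rw [inner_eq_sum', Finset.mul_sum]
      exact Finset.sum_congr rfl fun i _ => by ring
    rw [h1, h2, hPDν]; ring
  have hGV : (inner ℝ (gradient u x) (ν x) : ℝ) = ‖gradient u x‖ := by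
    rw [hν x, real_inner_smul_right, real_inner_self_eq_norm_sq]
    field_simp
  have hPG : (inner ℝ (gradient (φd x) (ν x)) (gradient u x) : ℝ)
      = ‖gradient u x‖ * φd x (ν x) := by
    have hPV : ‖gradient u x‖⁻¹ * (inner ℝ (gradient (φd x) (ν x)) (gradient u x) : ℝ)
        = φd x (ν x) := by
      rw [← hEuler, ← real_inner_smul_right, ← hν x]
    rw [← hPV]
    field_simp
  have hdrΞ : dr (ξτ x) * ‖gradient u x‖
      = -(‖gradient u x‖⁻¹ * (inner ℝ (H (ξτ x)) (ν x) : ℝ)) := by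
    have h := hunit (ξτ x)
    rw [hDν (ξτ x), inner_add_left, real_inner_smul_left, real_inner_smul_left, hGV] at h
    linarith
  have hRHSsum : (∑ j : Fin d, ∑ k : Fin d,
        ν x k * fderiv ℝ ξτ x (EuclideanSpace.single k 1) j * ν x j)
      = (inner ℝ (fderiv ℝ ξτ x (ν x)) (ν x) : ℝ) := by
    rw [inner_eq_sum']
    refine Finset.sum_congr rfl fun j _ => ?_
    rw [comp_decomp (fderiv ℝ ξτ x) (ν x) j, Finset.sum_mul]
  have hDξV : (inner ℝ (fderiv ℝ ξτ x (ν x)) (ν x) : ℝ) = dr (ξτ x) * ‖gradient u x‖ := by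
    have h := horthD (ν x)
    rw [hDν (ν x), inner_add_right, real_inner_smul_right, real_inner_smul_right, hGΞ] at h
    have hsw : (inner ℝ (ξτ x) (H (ν x)) : ℝ) = inner ℝ (H (ξτ x)) (ν x) := by
      exact (real_inner_comm _ _).trans (hsym (ν x) (ξτ x))
    rw [hsw] at h
    rw [hdrΞ]
    linarith
  rw [hLHS, hRHSsum, hDξV, hPG]
  ring
end
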